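/- arXiv:1708.09288 — 3 statements merged into one kernel-verified Lean document; each statement's English description precedes it below -/
import Mathlib

section
/- If v is any row vector in ℝ⁵ with nonnegative entries summing to 1 such that v ⬝ P = v, then v = π = (1/2, 1/6, 1/12, 1/4, 0); that is, π is the unique stationary distribution of P. -/
open Matrix Filter Topology

noncomputable def P : Matrix (Fin 5) (Fin 5) ℝ :=
  !![1/3, 1/6, 1/6, 1/3, 0;
     1/2,   0,   0, 1/2, 0;
       0,   1,   0,   0, 0;
       1,   0,   0,   0, 0;
       1,   0,   0,   0, 0]

noncomputable def pivec : Fin 5 → ℝ := ![1/2, 1/6, 1/12, 1/4, 0]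

theorem stationary_unique (v : Fin 5 → ℝ)
    (hnonneg : ∀ i : Fin 5, 0 ≤ v i) (hsum : ∑ i : Fin 5, v i = 1)
    (hstat : ∀ j : Fin 5, ∑ i : Fin 5, v i * P i j = v j) :
    v = pivec := by
  have h0 := hstat 0
  have h1 := hstat 1
  have h2 := hstat 2
  have h3 := hstat 3
  have h4 := hstat 4
  simp [P, Fin.sum_univ_five, Matrix.vecHead, Matrix.vecTail] at h0 h1 h2 h3 h4
  simp [Fin.sum_univ_five] at hsum
  funext i
  fin_cases i <;> simp [pivec] <;> linarith [hnonneg 0, hnonneg 1, hnonneg 2, hnonneg 3, hnonneg 4]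
end

section
/- For every row vector v in ℝ⁵ with nonnegative entries summing to 1 (an initial probability distribution over the five states), the sequence of row vectors v ⬝ Pⁿ converges entrywise to π = (1/2, 1/6, 1/12, 1/4, 0) as n → ∞. -/
open Matrix Filter Topology

private lemma abs_scal (c x : ℝ) (hc : 0 ≤ c) : |c * x| = c * |x| := by
  rw [abs_mul, abs_of_nonneg hc]

private lemma abs_le4 (x1 x2 x3 x4 : ℝ) : |x1 + x2 + x3 + x4| ≤ |x1| + |x2| + |x3| + |x4| := by
  calc |x1 + x2 + x3 + x4| ≤ |x1 + x2 + x3| + |x4| := abs_add_le _ _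
    _ ≤ |x1 + x2| + |x3| + |x4| := by linarith [abs_add_le (x1 + x2) x3]
    _ ≤ |x1| + |x2| + |x3| + |x4| := by linarith [abs_add_le x1 x2]

private lemma abs_le5 (x1 x2 x3 x4 x5 : ℝ) :
    |x1 + x2 + x3 + x4 + x5| ≤ |x1| + |x2| + |x3| + |x4| + |x5| := by
  calc |x1 + x2 + x3 + x4 + x5| ≤ |x1 + x2 + x3 + x4| + |x5| := abs_add_le _ _
    _ ≤ |x1| + |x2| + |x3| + |x4| + |x5| := by linarith [abs_le4 x1 x2 x3 x4]

/-- The ℓ¹ norm on row vectors. -/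
noncomputable def Nrm (u : Fin 5 → ℝ) : ℝ := ∑ j, |u j|

private lemma entries_vecMul_P (u : Fin 5 → ℝ) :
    (u ᵥ* P) 0 = 1/3 * u 0 + 1/2 * u 1 + u 3 + u 4 ∧
    (u ᵥ* P) 1 = 1/6 * u 0 + u 2 ∧
    (u ᵥ* P) 2 = 1/6 * u 0 ∧
    (u ᵥ* P) 3 = 1/3 * u 0 + 1/2 * u 1 ∧
    (u ᵥ* P) 4 = 0 := by
  refine ⟨?_, ?_, ?_, ?_, ?_⟩ <;>
    · simp [vecMul, dotProduct, P, Fin.sum_univ_five, Matrix.cons_val', Matrix.cons_val_zero,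
        Matrix.cons_val_one, Matrix.head_cons, Matrix.vecHead, Matrix.vecTail, Matrix.empty_val',
        Matrix.cons_val_fin_one, Function.comp]
      try ring

private lemma sum_vecMul_P (u : Fin 5 → ℝ) : ∑ j, (u ᵥ* P) j = ∑ i, u i := by
  obtain ⟨h0, h1, h2, h3, h4⟩ := entries_vecMul_P u
  simp only [Fin.sum_univ_five, h0, h1, h2, h3, h4]
  ring

private lemma pivec_vecMul : pivec ᵥ* P = pivec := by
  funext j
  fin_cases j <;>
    simp [vecMul, dotProduct, P, pivec, Fin.sum_univ_five, Matrix.cons_val', Matrix.cons_val_zero,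
      Matrix.cons_val_one, Matrix.head_cons, Matrix.vecHead, Matrix.vecTail, Matrix.empty_val',
      Matrix.cons_val_fin_one, Function.comp] <;> norm_num

private lemma Nrm_step_le (u : Fin 5 → ℝ) : Nrm (u ᵥ* P) ≤ Nrm u := by
  obtain ⟨h0, h1, h2, h3, h4⟩ := entries_vecMul_P u
  simp only [Nrm, Fin.sum_univ_five, h0, h1, h2, h3, h4]
  have t0 : |1/3 * u 0 + 1/2 * u 1 + u 3 + u 4| ≤ 1/3 * |u 0| + 1/2 * |u 1| + |u 3| + |u 4| := by
    calc _ ≤ |1/3 * u 0| + |1/2 * u 1| + |u 3| + |u 4| := abs_le4 _ _ _ _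
      _ = _ := by rw [abs_scal _ _ (by norm_num), abs_scal _ _ (by norm_num)]
  have t1 : |1/6 * u 0 + u 2| ≤ 1/6 * |u 0| + |u 2| := by
    calc _ ≤ |1/6 * u 0| + |u 2| := abs_add_le _ _
      _ = _ := by rw [abs_scal _ _ (by norm_num)]
  have t2 : |1/6 * u 0| = 1/6 * |u 0| := abs_scal _ _ (by norm_num)
  have t3 : |1/3 * u 0 + 1/2 * u 1| ≤ 1/3 * |u 0| + 1/2 * |u 1| := by
    calc _ ≤ |1/3 * u 0| + |1/2 * u 1| := abs_add_le _ _
      _ = _ := by rw [abs_scal _ _ (by norm_num), abs_scal _ _ (by norm_num)]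
  simp only [abs_zero]
  linarith

private lemma Nrm_contract (u : Fin 5 → ℝ) (hsum : ∑ i, u i = 0) :
    Nrm (u ᵥ* (P * P)) ≤ 2/3 * Nrm u := by
  rw [← Matrix.vecMul_vecMul]
  obtain ⟨h0, h1, h2, h3, h4⟩ := entries_vecMul_P u
  obtain ⟨g0, g1, g2, g3, g4⟩ := entries_vecMul_P (u ᵥ* P)
  simp only [h0, h1, h2, h3, h4] at g0 g1 g2 g3
  simp only [Fin.sum_univ_five] at hsum
  set a := u 0; set b := u 1; set c := u 2; set d := u 3; set e := u 4
  have e0 : (u ᵥ* P ᵥ* P) 0 = 7/36 * a + 1/3 * b + 1/6 * c := by rw [g0]; linarith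
  have e1 : (u ᵥ* P ᵥ* P) 1 = 2/9 * a + 1/12 * b + 1/6 * d + 1/6 * e := by rw [g1]; ring
  have e2 : (u ᵥ* P ᵥ* P) 2 = 1/18 * a + 1/12 * b + 1/6 * d + 1/6 * e := by rw [g2]; ring
  have e3 : (u ᵥ* P ᵥ* P) 3 = 7/36 * a + 1/6 * b + 1/2 * c + 1/3 * d + 1/3 * e := by
    rw [g3]; ring
  simp only [Nrm, Fin.sum_univ_five, e0, e1, e2, e3, g4, abs_zero]
  have t0 : |7/36 * a + 1/3 * b + 1/6 * c| ≤ 7/36 * |a| + 1/3 * |b| + 1/6 * |c| := by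
    calc _ ≤ |7/36 * a| + |1/3 * b| + |1/6 * c| := abs_add_three _ _ _
      _ = _ := by rw [abs_scal _ _ (by norm_num), abs_scal _ _ (by norm_num),
            abs_scal _ _ (by norm_num)]
  have t1 : |2/9 * a + 1/12 * b + 1/6 * d + 1/6 * e| ≤
      2/9 * |a| + 1/12 * |b| + 1/6 * |d| + 1/6 * |e| := by
    calc _ ≤ |2/9 * a| + |1/12 * b| + |1/6 * d| + |1/6 * e| := abs_le4 _ _ _ _
      _ = _ := by rw [abs_scal _ _ (by norm_num), abs_scal _ _ (by norm_num),
            abs_scal _ _ (by norm_num), abs_scal _ _ (by norm_num)]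
  have t2 : |1/18 * a + 1/12 * b + 1/6 * d + 1/6 * e| ≤
      1/18 * |a| + 1/12 * |b| + 1/6 * |d| + 1/6 * |e| := by
    calc _ ≤ |1/18 * a| + |1/12 * b| + |1/6 * d| + |1/6 * e| := abs_le4 _ _ _ _
      _ = _ := by rw [abs_scal _ _ (by norm_num), abs_scal _ _ (by norm_num),
            abs_scal _ _ (by norm_num), abs_scal _ _ (by norm_num)]
  have t3 : |7/36 * a + 1/6 * b + 1/2 * c + 1/3 * d + 1/3 * e| ≤
      7/36 * |a| + 1/6 * |b| + 1/2 * |c| + 1/3 * |d| + 1/3 * |e| := by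
    calc _ ≤ |7/36 * a| + |1/6 * b| + |1/2 * c| + |1/3 * d| + |1/3 * e| := abs_le5 _ _ _ _ _
      _ = _ := by rw [abs_scal _ _ (by norm_num), abs_scal _ _ (by norm_num),
            abs_scal _ _ (by norm_num), abs_scal _ _ (by norm_num), abs_scal _ _ (by norm_num)]
  linarith

theorem initial_distribution_tendsto_stationary :
    ∀ v : Fin 5 → ℝ, (∀ i : Fin 5, 0 ≤ v i) → (∑ i : Fin 5, v i = 1) →
      ∀ j : Fin 5,
        Tendsto (fun n : ℕ => (v ᵥ* (P ^ n)) j) atTop (𝓝 (pivec j)) := by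
  intro v hv hsum j
  set w : Fin 5 → ℝ := v - pivec with hw
  -- stationarity of pivec under all powers
  have hπn : ∀ n : ℕ, pivec ᵥ* (P ^ n) = pivec := by
    intro n
    induction n with
    | zero => simp
    | succ n ih => rw [pow_succ, ← Matrix.vecMul_vecMul, ih, pivec_vecMul]
  -- decomposition
  have hdecomp : ∀ n : ℕ, (v ᵥ* (P ^ n)) j - pivec j = (w ᵥ* (P ^ n)) j := by
    intro n
    rw [hw, Matrix.sub_vecMul, hπn n]
    simp
  -- sums stay zero
  have hsumw : ∑ i, w i = 0 := by
    have hπsum : ∑ i, pivec i = 1 := by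
      simp [pivec, Fin.sum_univ_five]; norm_num
    simp only [hw, Pi.sub_apply, Finset.sum_sub_distrib, hsum, hπsum, sub_self]
  have hsum0 : ∀ n : ℕ, ∑ i, (w ᵥ* (P ^ n)) i = 0 := by
    intro n
    induction n with
    | zero => simpa using hsumw
    | succ n ih => rw [pow_succ, ← Matrix.vecMul_vecMul, sum_vecMul_P, ih]
  -- geometric decay along even steps
  have heven : ∀ k : ℕ, Nrm (w ᵥ* (P ^ (2 * k))) ≤ (2/3 : ℝ) ^ k * Nrm w := by
    intro k
    induction k with
    | zero => simp [Nrm]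
    | succ k ih =>
      have hpow : P ^ (2 * (k + 1)) = P ^ (2 * k) * (P * P) := by
        rw [← pow_two, ← pow_add]; ring_nf
      rw [hpow, ← Matrix.vecMul_vecMul]
      calc Nrm ((w ᵥ* P ^ (2 * k)) ᵥ* (P * P)) ≤ 2/3 * Nrm (w ᵥ* P ^ (2 * k)) :=
            Nrm_contract _ (hsum0 (2 * k))
        _ ≤ 2/3 * ((2/3 : ℝ) ^ k * Nrm w) := by
            have := Nrm_contract (w ᵥ* P ^ (2 * k)) (hsum0 (2 * k))
            nlinarith [ih]
        _ = (2/3 : ℝ) ^ (k + 1) * Nrm w := by ring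
  -- decay for all n
  have hall : ∀ n : ℕ, Nrm (w ᵥ* (P ^ n)) ≤ (2/3 : ℝ) ^ (n / 2) * Nrm w := by
    intro n
    rcases Nat.even_or_odd n with ⟨k, hk⟩ | ⟨k, hk⟩
    · have hn : n = 2 * k := by omega
      have hd : n / 2 = k := by omega
      rw [hd, hn]; exact heven k
    · have hn : n = 2 * k + 1 := by omega
      have hd : n / 2 = k := by omega
      rw [hd, hn, pow_succ, ← Matrix.vecMul_vecMul]
      exact (Nrm_step_le _).trans (heven k)
  -- squeeze
  rw [← tendsto_sub_nhds_zero_iff]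
  have hb : ∀ n : ℕ, ‖(v ᵥ* P ^ n) j - pivec j‖ ≤ (2/3 : ℝ) ^ (n / 2) * Nrm w := by
    intro n
    rw [Real.norm_eq_abs, hdecomp n]
    calc |(w ᵥ* P ^ n) j| ≤ Nrm (w ᵥ* (P ^ n)) := by
          exact Finset.single_le_sum (f := fun i => |(w ᵥ* P ^ n) i|)
            (fun i _ => abs_nonneg _) (Finset.mem_univ j)
      _ ≤ (2/3 : ℝ) ^ (n / 2) * Nrm w := hall n
  have ht : Tendsto (fun n : ℕ => (2/3 : ℝ) ^ (n / 2) * Nrm w) atTop (𝓝 0) := by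
    have h1 : Tendsto (fun k : ℕ => (2/3 : ℝ) ^ k) atTop (𝓝 0) :=
      tendsto_pow_atTop_nhds_zero_of_lt_one (by norm_num) (by norm_num)
    have h2 : Tendsto (fun n : ℕ => n / 2) atTop atTop :=
      Filter.tendsto_atTop_atTop.mpr fun b => ⟨2 * b, fun n hn => by omega⟩
    have := (h1.comp h2).mul_const (Nrm w)
    simpa using this
  exact squeeze_zero_norm hb ht
end

section
/- The number 1 is an eigenvalue of P (viewed as a complex matrix), and every complex eigenvalue λ of P with λ ≠ 1 satisfies |λ| < 1. -/
open Matrix Filter Topology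

set_option maxHeartbeats 1000000 in
lemma det_lit (z : ℂ) :
    (!![z - 1/3, -(1/6), -(1/6), -(1/3), 0;
        -(1/2), z, 0, -(1/2), 0;
        0, -1, z, 0, 0;
        -1, 0, 0, z, 0;
        -1, 0, 0, 0, z] : Matrix (Fin 5) (Fin 5) ℂ).det
      = z * (z - 1) * (2 * z + 1) * (6 * z ^ 2 + z + 1) / 12 := by
  rw [Matrix.det_succ_row_zero]
  simp [Fin.sum_univ_succ, Matrix.det_succ_row_zero, Matrix.submatrix, Fin.succAbove,
    Matrix.vecHead, Matrix.vecTail, show ((2:Fin 4).castSucc : Fin 5) = 2 from rfl]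
  ring

set_option maxHeartbeats 800000 in
lemma eq_lit (z : ℂ) :
    algebraMap ℂ (Matrix (Fin 5) (Fin 5) ℂ) z - P.map Complex.ofReal
      = !![z - 1/3, -(1/6), -(1/6), -(1/3), 0;
        -(1/2), z, 0, -(1/2), 0;
        0, -1, z, 0, 0;
        -1, 0, 0, z, 0;
        -1, 0, 0, 0, z] := by
  ext i j
  fin_cases i <;> fin_cases j <;>
    simp [P, Matrix.algebraMap_matrix_apply, Matrix.vecHead, Matrix.vecTail]

lemma mem_spec_iff (z : ℂ) :
    z ∈ spectrum ℂ (P.map (Complex.ofReal)) ↔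
      z * (z - 1) * (2 * z + 1) * (6 * z ^ 2 + z + 1) = 0 := by
  rw [spectrum.mem_iff, Matrix.isUnit_iff_isUnit_det, isUnit_iff_ne_zero, not_not,
    eq_lit, det_lit]
  constructor
  · intro h
    field_simp at h
    linear_combination h
  · intro h; rw [h]; norm_num

theorem spectrum_of_P :
    (1 : ℂ) ∈ spectrum ℂ (P.map (Complex.ofReal)) ∧
      ∀ lam : ℂ, lam ∈ spectrum ℂ (P.map (Complex.ofReal)) → lam ≠ 1 →
        ‖lam‖ < 1 := by
  constructor
  · rw [mem_spec_iff]; ring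
  · intro lam h hne
    rw [mem_spec_iff] at h
    rcases mul_eq_zero.1 h with h | h3
    · rcases mul_eq_zero.1 h with h | h2
      · rcases mul_eq_zero.1 h with h0 | h1
        · rw [h0]; simp
        · exact absurd (by linear_combination h1) hne
      · have hl : lam = -1/2 := by linear_combination h2 / 2
        have : ‖lam‖ = 1/2 := by
          rw [hl, show (-1/2 : ℂ) = ((-1/2 : ℝ) : ℂ) by norm_num, Complex.norm_real]
          norm_num
        linarith
    · have e : ‖6 * lam ^ 2‖ = ‖lam + 1‖ := by
        rw [show (6 : ℂ) * lam ^ 2 = -(lam + 1) by linear_combination h3, norm_neg]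
      rw [norm_mul, norm_pow] at e
      have h6 : ‖(6 : ℂ)‖ = 6 := by
        rw [show (6 : ℂ) = ((6 : ℝ) : ℂ) by norm_num, Complex.norm_real]; norm_num
      have tri : ‖lam + 1‖ ≤ ‖lam‖ + 1 := by
        simpa using norm_add_le lam 1
      have h0 : 0 ≤ ‖lam‖ := norm_nonneg lam
      nlinarith [e, tri, h0, h6]
end
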